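/- Let g_1, …, g_n ∈ F_{q^m} be linearly independent over F_q, let f be a q-linearized polynomial over F_{q^m} of q-degree less than k, set c_i = f(g_i) for i = 1,…,n, and let r_1, …, r_n ∈ F_{q^m}. For an integer t ≥ 0, the F_q-dimension of the F_q-span of c_1 − r_1, …, c_n − r_n equals t if and only if there exists exactly one monic q-linearized polynomial D over F_{q^m} of q-degree t such that D(r_i) = D(c_i) for all i = 1, …, n. -/

import Mathlib

open Polynomial

/-- `f` is a `q`-linearized polynomial: every monomial with nonzero coefficient
has exponent a power of `q`, i.e. `f = Σ aᵢ X^(q^i)`. -/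
def IsqLinearized (q : ℕ) {L : Type*} [Field L] (f : L[X]) : Prop :=
  ∀ i : ℕ, f.coeff i ≠ 0 → ∃ j : ℕ, i = q ^ j

section Aux

variable {L : Type*} [Field L]

lemma aux_coeff_pow_char_pow (p : ℕ) [hp : Fact p.Prime] [CharP L p] (f : L[X]) (N : ℕ) :
    ∀ e, (f ^ p ^ N).coeff e ≠ 0 → ∃ e', e = e' * p ^ N ∧ f.coeff e' ≠ 0 := by
  induction N with
  | zero => intro e he; exact ⟨e, by simp, by simpa using he⟩
  | succ N ih =>
    intro e he
    rw [pow_succ, pow_mul, ← Polynomial.map_frobenius_expand p (f ^ p ^ N), Polynomial.coeff_map] at he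
    have h1 : ((Polynomial.expand L p) (f ^ p ^ N)).coeff e ≠ 0 := by
      intro h0; rw [h0] at he; exact he (map_zero _)
    rw [Polynomial.coeff_expand hp.out.pos] at h1
    split_ifs at h1 with hd
    · obtain ⟨e', he', hf'⟩ := ih (e / p) h1
      refine ⟨e', ?_, hf'⟩
      rw [pow_succ]
      calc e = e / p * p := (Nat.div_mul_cancel hd).symm
        _ = e' * p ^ N * p := by rw [he']
        _ = e' * (p ^ N * p) := by ring
    · exact absurd rfl h1

lemma aux_lin_pow {q p s : ℕ} (hq : q = p ^ s) [Fact p.Prime] [CharP L p] {f : L[X]}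
    (hf : IsqLinearized q f) (u : ℕ) : IsqLinearized q (f ^ q ^ u) := by
  intro e he
  rw [hq, ← pow_mul] at he
  obtain ⟨e', rfl, he'⟩ := aux_coeff_pow_char_pow p f (s * u) e he
  obtain ⟨j, rfl⟩ := hf e' he'
  refine ⟨j + u, ?_⟩
  rw [hq]
  rw [← pow_mul, ← pow_mul, ← pow_add, Nat.mul_add]

lemma aux_lin_sub_C_mul {q : ℕ} {f g : L[X]} (hf : IsqLinearized q f)
    (hg : IsqLinearized q g) (c : L) : IsqLinearized q (f - C c * g) := by
  intro i hi
  rw [Polynomial.coeff_sub, Polynomial.coeff_C_mul] at hi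
  by_cases h : f.coeff i = 0
  · refine hg i fun h0 => hi ?_
    rw [h, h0, mul_zero, sub_zero]
  · exact hf i h

lemma aux_lin_X {q : ℕ} : IsqLinearized q (X : L[X]) := by
  intro i hi
  rw [Polynomial.coeff_X] at hi
  refine ⟨0, ?_⟩
  rw [pow_zero]
  by_contra h
  rw [if_neg (fun h1 => h h1.symm)] at hi
  exact hi rfl

lemma aux_eval_add {q p s : ℕ} (hq : q = p ^ s) [Fact p.Prime] [CharP L p] {f : L[X]}
    (hf : IsqLinearized q f) (x y : L) : f.eval (x + y) = f.eval x + f.eval y := by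
  rw [Polynomial.eval_eq_sum, Polynomial.eval_eq_sum, Polynomial.eval_eq_sum,
    Polynomial.sum_def, Polynomial.sum_def, Polynomial.sum_def, ← Finset.sum_add_distrib]
  refine Finset.sum_congr rfl fun i hi => ?_
  obtain ⟨j, rfl⟩ := hf i (Polynomial.mem_support_iff.mp hi)
  rw [hq, ← pow_mul, add_pow_char_pow, mul_add]

lemma aux_eval_zero {q : ℕ} (hq2 : 2 ≤ q) {f : L[X]} (hf : IsqLinearized q f) :
    f.eval 0 = 0 := by
  rw [← Polynomial.coeff_zero_eq_eval_zero]
  by_contra h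
  obtain ⟨j, hj⟩ := hf 0 h
  exact (pow_pos (show 0 < q by omega) j).ne' hj.symm

lemma aux_eval_sub {q p s : ℕ} (hq : q = p ^ s) [Fact p.Prime] [CharP L p] {f : L[X]}
    (hf : IsqLinearized q f) (x y : L) : f.eval (x - y) = f.eval x - f.eval y := by
  have := aux_eval_add hq hf (x - y) y
  rw [sub_add_cancel] at this
  rw [this]; ring

variable (F : Type*) [Field F] [Fintype F] [Algebra F L]

lemma aux_eval_smul {q p s : ℕ} (hq : q = p ^ s) [Fact p.Prime] [CharP L p]
    (hcardF : Fintype.card F = q) {f : L[X]} (hf : IsqLinearized q f) (a : F) (x : L) :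
    f.eval (a • x) = a • f.eval x := by
  rw [Algebra.smul_def, Algebra.smul_def, Polynomial.eval_eq_sum, Polynomial.eval_eq_sum,
    Polynomial.sum_def, Polynomial.sum_def, Finset.mul_sum]
  refine Finset.sum_congr rfl fun i hi => ?_
  obtain ⟨j, rfl⟩ := hf i (Polynomial.mem_support_iff.mp hi)
  rw [mul_pow, ← map_pow]
  have ha : a ^ q ^ j = a := by rw [← hcardF]; exact FiniteField.pow_card_pow j a
  rw [ha]; ring

lemma aux_vanish_span {q p s : ℕ} (hq : q = p ^ s) (hq2 : 2 ≤ q) [Fact p.Prime] [CharP L p]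
    (hcardF : Fintype.card F = q) {f : L[X]} (hf : IsqLinearized q f) {ι : Type*} (e : ι → L)
    (h : ∀ i, f.eval (e i) = 0) : ∀ v ∈ Submodule.span F (Set.range e), f.eval v = 0 := by
  intro v hv
  induction hv using Submodule.span_induction with
  | mem x hx => obtain ⟨i, rfl⟩ := hx; exact h i
  | zero => exact aux_eval_zero hq2 hf
  | add x y hx hy ihx ihy => rw [aux_eval_add hq hf, ihx, ihy, add_zero]
  | smul a x hx ihx => rw [aux_eval_smul F hq hcardF hf, ihx, smul_zero]

/-- Existence of the subspace polynomial, by induction on a spanning sequence. -/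
lemma aux_subspace_poly {q p s : ℕ} (hq : q = p ^ s) (hq2 : 2 ≤ q) [Fact p.Prime] [CharP L p]
    (hcardF : Fintype.card F = q) (b : ℕ → L) :
    ∀ j : ℕ, ∃ D : L[X], D.Monic ∧ IsqLinearized q D ∧ D.natDegree = q ^ j ∧
      ∀ v ∈ Submodule.span F (b '' Set.Iio j), D.eval v = 0 := by
  intro j
  induction j with
  | zero =>
    refine ⟨X, monic_X, aux_lin_X, by simp, ?_⟩
    intro v hv
    have : (Set.Iio (0 : ℕ)) = ∅ := by ext x; simp
    rw [this, Set.image_empty, Submodule.span_empty, Submodule.mem_bot] at hv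
    rw [hv, Polynomial.eval_X]
  | succ j ih =>
    obtain ⟨D, hD, hlin, hdeg, hvan⟩ := ih
    set u : L := D.eval (b j) with hu
    refine ⟨D ^ q - C (u ^ (q - 1)) * D, ?_, ?_, ?_, ?_⟩
    · rw [sub_eq_add_neg]
      refine (hD.pow q).add_of_left ?_
      rw [Polynomial.degree_neg]
      calc (C (u ^ (q - 1)) * D).degree ≤ D.degree := by
            calc (C (u ^ (q - 1)) * D).degree ≤ (C (u ^ (q - 1))).degree + D.degree :=
                Polynomial.degree_mul_le _ _
              _ ≤ 0 + D.degree := add_le_add_left Polynomial.degree_C_le _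
              _ = D.degree := zero_add _
        _ < (D ^ q).degree := by
            rw [Polynomial.degree_eq_natDegree hD.ne_zero,
              Polynomial.degree_eq_natDegree (hD.pow q).ne_zero, Nat.cast_lt,
              Polynomial.natDegree_pow, hdeg]
            calc q ^ j < q ^ (j + 1) := Nat.pow_lt_pow_succ (by omega)
              _ = q * q ^ j := by ring
    · have := aux_lin_pow hq hlin 1
      rw [pow_one] at this
      exact aux_lin_sub_C_mul this hlin _
    · rw [Polynomial.natDegree_sub_eq_left_of_natDegree_lt, Polynomial.natDegree_pow, hdeg]
      · ring
      · calc (C (u ^ (q - 1)) * D).natDegree ≤ D.natDegree := Polynomial.natDegree_C_mul_le _ _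
          _ < (D ^ q).natDegree := by
            rw [Polynomial.natDegree_pow, hdeg]
            calc q ^ j < q ^ (j + 1) := Nat.pow_lt_pow_succ (by omega)
              _ = q * q ^ j := by ring
    · intro v hv
      have hset : b '' Set.Iio (j + 1) = insert (b j) (b '' Set.Iio j) := by
        rw [show Set.Iio (j + 1) = insert j (Set.Iio j) by
          ext x; simp only [Set.mem_insert_iff, Set.mem_Iio]; omega]
        rw [Set.image_insert_eq]
      rw [hset, Submodule.span_insert] at hv
      obtain ⟨y, hy, z, hz, rfl⟩ := Submodule.mem_sup.mp hv
      obtain ⟨a, rfl⟩ := Submodule.mem_span_singleton.mp hy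
      have hDv : D.eval (a • b j + z) = a • u := by
        rw [aux_eval_add hq hlin, aux_eval_smul F hq hcardF hlin, hvan z hz, add_zero, hu]
      rw [Polynomial.eval_sub, Polynomial.eval_pow, Polynomial.eval_mul, Polynomial.eval_C,
        hDv, Algebra.smul_def, mul_pow, ← map_pow]
      have ha : a ^ q = a := by rw [← hcardF]; exact FiniteField.pow_card a
      have hun : u ^ (q - 1) * u = u ^ q := by
        rw [← pow_succ, Nat.sub_add_cancel (by omega)]
      rw [ha]
      calc algebraMap F L a * u ^ q - u ^ (q - 1) * (algebraMap F L a * u)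
          = algebraMap F L a * u ^ q - algebraMap F L a * (u ^ (q - 1) * u) := by ring
        _ = 0 := by rw [hun, sub_self]

/-- Root-counting bound: a nonzero polynomial vanishing on a subspace `V` has
degree at least `|V| = q ^ dim V`. -/
lemma aux_card_le {q : ℕ} (hcardF : Fintype.card F = q) [Fintype L]
    (V : Submodule F L) (P : L[X]) (hP : P ≠ 0) (h : ∀ v ∈ V, P.eval v = 0) :
    q ^ Module.finrank F V ≤ P.natDegree := by
  classical
  haveI : Fintype V := Fintype.ofFinite _
  have hcard : Fintype.card V = q ^ Module.finrank F V := by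
    rw [Module.card_eq_pow_finrank (K := F), hcardF]
  rw [← hcard]
  have hinj : Function.Injective (fun v : V => (⟨(v : L), by
      rw [Multiset.mem_toFinset, Polynomial.mem_roots']
      exact ⟨hP, h v v.2⟩⟩ : P.roots.toFinset)) := by
    intro a b hab
    simp only [Subtype.mk.injEq] at hab
    exact Subtype.ext hab
  calc Fintype.card V ≤ Fintype.card P.roots.toFinset := Fintype.card_le_of_injective _ hinj
    _ = P.roots.toFinset.card := Fintype.card_coe _
    _ ≤ Multiset.card P.roots := Multiset.toFinset_card_le _
    _ ≤ P.natDegree := Polynomial.card_roots' _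

end Aux

/-- The codeword `c = (f(g₁), …, f(gₙ))` has rank distance `t` to `r` if and only if
there exists exactly one monic `q`-linearized polynomial `D` of `q`-degree `t` with
`D(rᵢ) = D(cᵢ)` for all `i`. -/
theorem rank_distance_iff_unique_error_span_polynomial
    (q m : ℕ) (hq : IsPrimePow q) (hm : 0 < m)
    (F L : Type*) [Field F] [Field L] [Fintype F] [Fintype L] [Algebra F L]
    (hcardF : Fintype.card F = q) (hcardL : Fintype.card L = q ^ m)
    (n k : ℕ) (g : Fin n → L) (hg : LinearIndependent F g) (r : Fin n → L)
    (f : L[X]) (hf : IsqLinearized q f) (hfd : f.natDegree < q ^ k)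
    (c : Fin n → L) (hc : ∀ i, c i = f.eval (g i)) (t : ℕ) :
    Module.finrank F (Submodule.span F (Set.range fun i => c i - r i)) = t ↔
      ∃! D : L[X], D.Monic ∧ IsqLinearized q D ∧ D.natDegree = q ^ t ∧
        ∀ i, D.eval (r i) = D.eval (c i) := by
  classical
  -- extract the characteristic
  obtain ⟨p, s, hp, hs, hqps⟩ := hq
  rw [← Nat.prime_iff] at hp
  haveI : Fact p.Prime := ⟨hp⟩
  have hqps' : q = p ^ s := hqps.symm
  have hq2 : 2 ≤ q := by
    rw [hqps']
    calc 2 ≤ p := hp.two_le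
      _ = p ^ 1 := (pow_one p).symm
      _ ≤ p ^ s := Nat.pow_le_pow_right hp.pos hs
  -- CharP L p
  haveI : CharP L p := by
    obtain ⟨p', hcp'⟩ := CharP.exists L
    haveI := hcp'
    have hp' : p'.Prime := CharP.char_is_prime L p'
    obtain ⟨nn, _, hnn⟩ := FiniteField.card L p'
    have : p ∣ p' := by
      have h1 : p ∣ Fintype.card L := by
        rw [hcardL, hqps']
        exact dvd_pow (dvd_pow_self p hs.ne') (by positivity)
      rw [hnn] at h1
      exact hp.dvd_of_dvd_pow h1
    rwa [(Nat.prime_dvd_prime_iff_eq hp hp').mp this]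
  haveI : FiniteDimensional F L := Module.Finite.of_finite
  set e : Fin n → L := fun i => c i - r i with he
  set V : Submodule F L := Submodule.span F (Set.range e) with hV
  -- equivalence of predicates for linearized polynomials
  have hpred : ∀ D : L[X], IsqLinearized q D →
      ((∀ i, D.eval (r i) = D.eval (c i)) ↔ ∀ v ∈ V, D.eval v = 0) := by
    intro D hD
    constructor
    · intro h
      refine aux_vanish_span F hqps' hq2 hcardF hD e (fun i => ?_)
      rw [he]
      simp only []
      rw [aux_eval_sub hqps' hD, ← h i, sub_self]
    · intro h i
      have : D.eval (c i - r i) = 0 := h _ (Submodule.subset_span ⟨i, rfl⟩)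
      rw [aux_eval_sub hqps' hD] at this
      exact (sub_eq_zero.mp this).symm
  -- main existence-uniqueness at dimension finrank V
  have hmain : ∀ (W : Submodule F L), ∃ D : L[X], D.Monic ∧ IsqLinearized q D ∧
      D.natDegree = q ^ (Module.finrank F W) ∧ ∀ v ∈ W, D.eval v = 0 := by
    intro W
    set d := Module.finrank F W with hd
    let bas : Module.Basis (Fin d) F W := Module.finBasis F W
    let b : ℕ → L := fun i => if h : i < d then (bas ⟨i, h⟩ : L) else 0
    obtain ⟨D, hD, hlin, hdeg, hvan⟩ := aux_subspace_poly F hqps' hq2 hcardF b d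
    refine ⟨D, hD, hlin, hdeg, ?_⟩
    have hspan : Submodule.span F (b '' Set.Iio d) = W := by
      have h1 : b '' Set.Iio d = Set.range (fun i : Fin d => (bas i : L)) := by
        ext x
        constructor
        · rintro ⟨i, hi, rfl⟩
          have hi' : i < d := hi
          refine ⟨⟨i, hi'⟩, ?_⟩
          show (bas ⟨i, hi'⟩ : L) = b i
          simp only [b]
          rw [dif_pos hi']
        · rintro ⟨i, rfl⟩
          refine ⟨i.1, i.2, ?_⟩
          show b i.1 = (bas i : L)
          simp only [b]
          rw [dif_pos i.2]
      rw [h1]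
      have h2 : Set.range (fun i : Fin d => (bas i : L)) = W.subtype '' Set.range bas := by
        rw [← Set.range_comp]; rfl
      rw [h2, ← Submodule.map_span, bas.span_eq, Submodule.map_top, Submodule.range_subtype]
    intro v hv
    exact hvan v (hspan ▸ hv)
  -- uniqueness at dimension finrank V
  have huniq : ∀ (W : Submodule F L) (D1 D2 : L[X]), D1.Monic → D2.Monic →
      D1.natDegree = q ^ (Module.finrank F W) → D2.natDegree = q ^ (Module.finrank F W) →
      (∀ v ∈ W, D1.eval v = 0) → (∀ v ∈ W, D2.eval v = 0) → D1 = D2 := by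
    intro W D1 D2 h1 h2 hd1 hd2 hv1 hv2
    by_contra hne
    have hP : D1 - D2 ≠ 0 := sub_ne_zero.mpr hne
    have hdlt : (D1 - D2).degree < D1.degree :=
      Polynomial.degree_sub_lt (by
        rw [Polynomial.degree_eq_natDegree h1.ne_zero, Polynomial.degree_eq_natDegree h2.ne_zero,
          hd1, hd2]) h1.ne_zero (by rw [h1.leadingCoeff, h2.leadingCoeff])
    have hlt : (D1 - D2).natDegree < q ^ (Module.finrank F W) := by
      have := Polynomial.natDegree_lt_natDegree hP hdlt
      rwa [hd1] at this
    have hge : q ^ (Module.finrank F W) ≤ (D1 - D2).natDegree := by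
      refine aux_card_le F hcardF W _ hP (fun v hv => ?_)
      rw [Polynomial.eval_sub, hv1 v hv, hv2 v hv, sub_self]
    omega
  constructor
  · -- finrank = t → ∃!
    intro ht
    obtain ⟨D, hD, hlin, hdeg, hvan⟩ := hmain V
    rw [ht] at hdeg
    refine ⟨D, ⟨hD, hlin, hdeg, (hpred D hlin).mpr hvan⟩, ?_⟩
    rintro D' ⟨hD', hlin', hdeg', hr'⟩
    exact huniq V D' D hD' hD (by rw [hdeg', ht]) (by rw [hdeg, ht])
      ((hpred D' hlin').mp hr') hvan
  · -- ∃! → finrank = t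
    rintro ⟨D, ⟨hD, hlin, hdeg, hr⟩, hDuniq⟩
    set d := Module.finrank F V with hd
    by_contra hne
    rcases Nat.lt_or_ge t d with hlt | hge
    · -- t < d : D has too small degree to vanish on V
      have hvan : ∀ v ∈ V, D.eval v = 0 := (hpred D hlin).mp hr
      have := aux_card_le F hcardF V D hD.ne_zero hvan
      rw [hdeg] at this
      have : d ≤ t := (Nat.pow_le_pow_iff_right hq2).mp (hd ▸ this)
      omega
    · have hdt : d < t := by omega
      -- d < t : two distinct witnesses
      obtain ⟨Ds, hDs, hlins, hdegs, hvans⟩ := hmain V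
      rw [← hd] at hdegs
      set E1 : L[X] := Ds ^ q ^ (t - d) with hE1
      have hE1monic : E1.Monic := hDs.pow _
      have hE1deg : E1.natDegree = q ^ t := by
        rw [hE1, Polynomial.natDegree_pow, hdegs, ← pow_add, Nat.sub_add_cancel hdt.le]
      have hE1lin : IsqLinearized q E1 := aux_lin_pow hqps' hlins (t - d)
      have hE1van : ∀ v ∈ V, E1.eval v = 0 := by
        intro v hv
        rw [hE1, Polynomial.eval_pow, hvans v hv, zero_pow (by positivity)]
      set E2 : L[X] := E1 - C (1 : L) * Ds with hE2
      have hdlts : Ds.natDegree < E1.natDegree := by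
        rw [hE1deg, hdegs]
        exact Nat.pow_lt_pow_right (by omega) hdt
      have hE2monic : E2.Monic := by
        rw [hE2, sub_eq_add_neg]
        refine hE1monic.add_of_left ?_
        rw [Polynomial.degree_neg]
        calc (C (1 : L) * Ds).degree ≤ (C (1 : L)).degree + Ds.degree :=
            Polynomial.degree_mul_le _ _
          _ ≤ 0 + Ds.degree := add_le_add_left Polynomial.degree_C_le _
          _ = Ds.degree := zero_add _
          _ < E1.degree := by
            rw [Polynomial.degree_eq_natDegree hDs.ne_zero,
              Polynomial.degree_eq_natDegree hE1monic.ne_zero, Nat.cast_lt]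
            exact hdlts
      have hE2deg : E2.natDegree = q ^ t := by
        rw [hE2, Polynomial.natDegree_sub_eq_left_of_natDegree_lt, hE1deg]
        calc (C (1 : L) * Ds).natDegree ≤ Ds.natDegree := Polynomial.natDegree_C_mul_le _ _
          _ < E1.natDegree := hdlts
      have hE2lin : IsqLinearized q E2 := aux_lin_sub_C_mul hE1lin hlins _
      have hE2van : ∀ v ∈ V, E2.eval v = 0 := by
        intro v hv
        rw [hE2, Polynomial.eval_sub, Polynomial.eval_mul, Polynomial.eval_C, hE1van v hv,
          hvans v hv, mul_zero, sub_self]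
      have h1 : E1 = D := hDuniq E1 ⟨hE1monic, hE1lin, hE1deg, (hpred E1 hE1lin).mpr hE1van⟩
      have h2 : E2 = D := hDuniq E2 ⟨hE2monic, hE2lin, hE2deg, (hpred E2 hE2lin).mpr hE2van⟩
      have hEE : E1 - C (1 : L) * Ds = E1 := (h1.trans h2.symm).symm
      have h3 : C (1 : L) * Ds = 0 := sub_eq_self.mp hEE
      rw [Polynomial.C_1, one_mul] at h3
      exact hDs.ne_zero h3
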